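/- Let G be a finitely generated group with a normal abelian subgroup N such that G/N is free abelian (of finite rank). If for all a ∈ G and b ∈ N the subgroup ⟨a, b⟩ is virtually abelian, then G is polycyclic. -/

import Mathlib

/-- A group is *virtually abelian* if it has an abelian subgroup of finite index. -/
def VirtuallyAbelian (G : Type*) [Group G] : Prop :=
  ∃ A : Subgroup G, IsMulCommutative A ∧ A.FiniteIndex

/-- A group is *polycyclic* if it has a finite subnormal series with cyclic factor groups. -/
def IsPolycyclic (G : Type*) [Group G] : Prop :=
  ∃ (n : ℕ) (σ : Fin (n + 1) → Subgroup G),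
    σ 0 = ⊥ ∧ σ (Fin.last n) = ⊤ ∧
    ∀ i : Fin n, σ i.castSucc ≤ σ i.succ ∧
      ∃ hnorm : ((σ i.castSucc).subgroupOf (σ i.succ)).Normal,
        letI := hnorm
        IsCyclic ((σ i.succ) ⧸ (σ i.castSucc).subgroupOf (σ i.succ))

open scoped commutatorElement

section Helpers1

variable {G : Type} [Group G] (N : Subgroup G) [N.Normal]

lemma conj_eq_conj (hNab : IsMulCommutative N) {u v x : G} (huv : u * v⁻¹ ∈ N) (hx : x ∈ N) :
    u * x * u⁻¹ = v * x * v⁻¹ := by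
  haveI := hNab
  have hvx : v * x * v⁻¹ ∈ N := (‹N.Normal›).conj_mem x hx v
  have key : (u * v⁻¹) * (v * x * v⁻¹) = (v * x * v⁻¹) * (u * v⁻¹) :=
    N.mul_comm_of_mem_isMulCommutative huv hvx
  have : u * x * u⁻¹ = (u * v⁻¹) * (v * x * v⁻¹) * (u * v⁻¹)⁻¹ := by group
  rw [this, key]
  group

lemma orbit_fg (hNab : IsMulCommutative N) (a b : G) (hb : b ∈ N)
    (hva : VirtuallyAbelian (Subgroup.closure ({a, b} : Set G))) :
    (Subgroup.closure (Set.range fun m : ℤ => a ^ m * b * a ^ (-m))).FG := by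
  haveI := hNab
  set c : ℤ → G := fun m => a ^ m * b * a ^ (-m) with hc
  have hcN : ∀ m : ℤ, c m ∈ N := by
    intro m
    have := (‹N.Normal›).conj_mem b hb (a ^ m)
    simpa [hc, zpow_neg] using this
  have hcomm : ∀ m m' : ℤ, Commute (c m) (c m') := fun m m' =>
    N.mul_comm_of_mem_isMulCommutative (hcN m) (hcN m')
  -- extract the recurrence
  set H := Subgroup.closure ({a, b} : Set G) with hH
  obtain ⟨A, hAcomm, hAfin⟩ := hva
  haveI := hAcomm
  haveI := hAfin
  set B := A.normalCore with hB
  haveI : B.Normal := Subgroup.normalCore_normal A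
  haveI : B.FiniteIndex := Subgroup.finiteIndex_normalCore A
  haveI hBcomm : IsMulCommutative B := by
    constructor
    constructor
    intro x y
    apply Subtype.ext
    exact A.mul_comm_of_mem_isMulCommutative (A.normalCore_le x.2) (A.normalCore_le y.2)
  set M : ℕ := B.index with hM
  have hM0 : 0 < M := Nat.pos_of_ne_zero Subgroup.FiniteIndex.index_ne_zero
  set α : H := ⟨a, Subgroup.subset_closure (by simp)⟩ with hα
  set β : H := ⟨b, Subgroup.subset_closure (by simp)⟩ with hβ
  set c' : ℤ → H := fun m => α ^ m * β * α ^ (-m) with hc'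
  have hc'c : ∀ m : ℤ, (c' m : G) = c m := by intro m; simp [hc', hc, hα, hβ]
  set g : H := α ^ (M : ℤ) with hg
  have hgB : g ∈ B := by
    have := B.pow_index_mem α
    rwa [← hM, ← zpow_natCast] at this
  have hshift : ∀ m : ℤ, c' (m + M) = g * c' m * g⁻¹ := by
    intro m
    simp only [hc', hg]
    group
  have heB : ∀ m : ℤ, c' (m + M) * (c' m)⁻¹ ∈ B := by
    intro m
    rw [hshift m]
    have h1 : c' m * g⁻¹ * (c' m)⁻¹ ∈ B := Subgroup.Normal.conj_mem ‹B.Normal› _ (B.inv_mem hgB) _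
    have : g * c' m * g⁻¹ * (c' m)⁻¹ = g * (c' m * g⁻¹ * (c' m)⁻¹) := by group
    rw [this]
    exact B.mul_mem hgB h1
  have hper : ∀ m : ℤ, c' (m + M + M) * (c' (m + M))⁻¹ = c' (m + M) * (c' m)⁻¹ := by
    intro m
    have h1 : c' (m + M + M) * (c' (m + M))⁻¹ = g * (c' (m + M) * (c' m)⁻¹) * g⁻¹ := by
      rw [hshift (m + M), hshift m]
      group
    have h2 := B.mul_comm_of_mem_isMulCommutative hgB (heB m)
    rw [h1, h2]
    group
  have hrec : ∀ m : ℤ, c (m + M + M) = c (m + M) * (c m)⁻¹ * c (m + M) := by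
    intro m
    have := hper m
    have h2 : c' (m + M + M) = c' (m + M) * (c' m)⁻¹ * c' (m + M) := by
      rw [← this]; group
    have := congrArg (Subtype.val) h2
    simpa [hc'c] using this
  set V := Subgroup.closure (c '' Set.Ico (0:ℤ) (2*(M:ℤ))) with hV
  have hrec' : ∀ m : ℤ, c m = c (m + M) * (c (m + M + M))⁻¹ * c (m + M) := by
    intro m
    rw [hrec m]
    group
  have hpos : ∀ n : ℕ, ∀ m : ℤ, 0 ≤ m → m < n → c m ∈ V := by
    intro n
    induction n with
    | zero => intro m h0 hlt; omega
    | succ n ih =>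
      intro m h0 hlt
      by_cases hm : m < 2*(M:ℤ)
      · exact Subgroup.subset_closure ⟨m, ⟨h0, hm⟩, rfl⟩
      · push_neg at hm
        have e1 := hrec (m - 2*M)
        have e2 : m - 2*M + M + M = m := by ring
        have e3 : m - 2*M + M = m - M := by ring
        rw [e2, e3] at e1
        rw [e1]
        have hc1 : (0:ℤ) ≤ m - M := by push_cast; omega
        have hc2 : m - M < (n:ℤ) := by push_cast at hlt ⊢; omega
        have hc3 : (0:ℤ) ≤ m - 2*M := by push_cast; omega
        have hc4 : m - 2*M < (n:ℤ) := by push_cast at hlt ⊢; omega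
        have hmem1 : c (m - M) ∈ V := ih (m - M) hc1 hc2
        have hmem2 : c (m - 2*M) ∈ V := ih (m - 2*M) hc3 hc4
        exact V.mul_mem (V.mul_mem hmem1 (V.inv_mem hmem2)) hmem1
  have hneg : ∀ n : ℕ, ∀ m : ℤ, -(n:ℤ) ≤ m → c m ∈ V := by
    intro n
    induction n with
    | zero =>
      intro m hm
      exact hpos (m.toNat + 1) m (by omega) (by omega)
    | succ n ih =>
      intro m hm
      by_cases h0 : -(n:ℤ) ≤ m
      · exact ih m h0
      · push_neg at h0
        rw [hrec' m]
        have hmem1 : c (m + M) ∈ V := ih (m + M) (by push_cast at hm ⊢; omega)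
        have hmem2 : c (m + M + M) ∈ V := ih (m + M + M) (by push_cast at hm ⊢; omega)
        exact V.mul_mem (V.mul_mem hmem1 (V.inv_mem hmem2)) hmem1
  have hall : ∀ m : ℤ, c m ∈ V := fun m => hneg m.natAbs m (by omega)
  have hVeq : Subgroup.closure (Set.range c) = V := by
    apply le_antisymm
    · rw [Subgroup.closure_le]
      rintro x ⟨m, rfl⟩
      exact hall m
    · exact Subgroup.closure_mono (Set.image_subset_range c _)
  rw [hVeq]
  exact (Subgroup.fg_iff _).2 ⟨c '' Set.Ico (0:ℤ) (2*(M:ℤ)), rfl, (Set.finite_Ico _ _).image c⟩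


lemma step_fg (hNab : IsMulCommutative N)
    (hcommN : ∀ u v : G, ⁅u, v⁆ ∈ N)
    (h : ∀ a : G, ∀ b ∈ N, VirtuallyAbelian (Subgroup.closure {a, b}))
    (a : G) (M : Subgroup G) (hfg : M.FG) (hMN : M ≤ N) :
    ∃ M' : Subgroup G, M'.FG ∧ M ≤ M' ∧ M' ≤ N ∧
      (∀ m : ℤ, ∀ x ∈ M', a ^ m * x * (a ^ m)⁻¹ ∈ M') ∧
      (∀ g : G, (∀ x ∈ M, g * x * g⁻¹ ∈ M) → ∀ x ∈ M', g * x * g⁻¹ ∈ M') := by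
  haveI := hNab
  obtain ⟨S, hSM, hSfin⟩ := (Subgroup.fg_iff M).1 hfg
  haveI := hSfin.to_subtype
  set cf : S → ℤ → G := fun s m => a ^ m * (s : G) * a ^ (-m) with hcf
  set M' := Subgroup.closure (⋃ s : S, Set.range (cf s)) with hM'
  have hmemS : ∀ s : S, (s : G) ∈ M := fun s => hSM ▸ Subgroup.subset_closure s.2
  have hSN : ∀ s : S, (s : G) ∈ N := fun s => hMN (hmemS s)
  have hgen : ∀ (s : S) (m : ℤ), cf s m ∈ M' :=
    fun s m => Subgroup.subset_closure (Set.mem_iUnion.2 ⟨s, ⟨m, rfl⟩⟩)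
  have hMM' : M ≤ M' := by
    rw [← hSM, Subgroup.closure_le]
    intro s hs
    have := hgen ⟨s, hs⟩ 0
    simpa [hcf] using this
  have hM'N : M' ≤ N := by
    rw [hM', Subgroup.closure_le]
    rintro x hx
    obtain ⟨s, ⟨m, rfl⟩⟩ := Set.mem_iUnion.1 hx
    have := (‹N.Normal›).conj_mem _ (hSN s) (a ^ m)
    simpa [hcf, zpow_neg] using this
  have hinv : ∀ m : ℤ, ∀ x ∈ M', a ^ m * x * (a ^ m)⁻¹ ∈ M' := by
    intro m x hx
    rw [← zpow_neg]
    induction hx using Subgroup.closure_induction with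
    | mem y hy =>
      obtain ⟨s, ⟨j, rfl⟩⟩ := Set.mem_iUnion.1 hy
      have e : a ^ m * cf s j * a ^ (-m) = cf s (m + j) := by
        simp only [hcf]
        rw [zpow_add, show -(m+j) = -j + -m from by ring, zpow_add]
        group
      rw [e]
      exact hgen s (m + j)
    | one => simpa using M'.one_mem
    | mul y z hy hz ihy ihz =>
      have e : a ^ m * (y * z) * a ^ (-m) = (a ^ m * y * a ^ (-m)) * (a ^ m * z * a ^ (-m)) := by
        group
      rw [e]; exact M'.mul_mem ihy ihz
    | inv y hy ihy =>
      have e : a ^ m * y⁻¹ * a ^ (-m) = (a ^ m * y * a ^ (-m))⁻¹ := by group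
      rw [e]; exact M'.inv_mem ihy
  refine ⟨M', ?_, hMM', hM'N, hinv, ?_⟩
  · -- finite generation
    have hW : ∀ s : S, (Subgroup.closure (Set.range (cf s))).FG :=
      fun s => orbit_fg N hNab a s (hSN s) (h a s (hSN s))
    choose F hF using fun s : S => hW s
    have : M' = Subgroup.closure (⋃ s : S, (F s : Set G)) := by
      rw [hM', Subgroup.closure_iUnion, Subgroup.closure_iUnion]
      congr 1
      funext s
      exact (hF s).symm ▸ rfl
    rw [this]
    exact (Subgroup.fg_iff _).2 ⟨_, rfl, Set.finite_iUnion fun s => (F s).finite_toSet⟩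
  · -- preservation of conjugation-stability
    intro g hg x hx
    induction hx using Subgroup.closure_induction with
    | mem y hy =>
      obtain ⟨s, ⟨j, rfl⟩⟩ := Set.mem_iUnion.1 hy
      have huv : (g * a ^ j) * (a ^ j * g)⁻¹ ∈ N := by
        have h2 := hcommN g (a ^ j)
        rw [commutatorElement_def] at h2
        have e : (g * a ^ j) * (a ^ j * g)⁻¹ = g * a ^ j * g⁻¹ * (a ^ j)⁻¹ := by group
        rw [e]; exact h2
      have k1 : (g * a ^ j) * (s : G) * (g * a ^ j)⁻¹ = (a ^ j * g) * (s : G) * (a ^ j * g)⁻¹ :=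
        conj_eq_conj N hNab huv (hSN s)
      have e2 : g * cf s j * g⁻¹ = (g * a ^ j) * (s : G) * (g * a ^ j)⁻¹ := by
        simp only [hcf, zpow_neg]; group
      have e3 : (a ^ j * g) * (s : G) * (a ^ j * g)⁻¹ = a ^ j * (g * (s : G) * g⁻¹) * (a ^ j)⁻¹ := by
        group
      rw [e2, k1, e3]
      exact hinv j _ (hMM' (hg _ (hmemS s)))
    | one => simpa using M'.one_mem
    | mul y z hy hz ihy ihz =>
      have e : g * (y * z) * g⁻¹ = (g * y * g⁻¹) * (g * z * g⁻¹) := by group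
      rw [e]; exact M'.mul_mem ihy ihz
    | inv y hy ihy =>
      have e : g * y⁻¹ * g⁻¹ = (g * y * g⁻¹)⁻¹ := by group
      rw [e]; exact M'.inv_mem ihy


lemma N_fg (hfg : Group.FG G) (hNab : IsMulCommutative N) (k : ℕ)
    (e : (G ⧸ N) ≃* Multiplicative (Fin k → ℤ))
    (h : ∀ a : G, ∀ b ∈ N, VirtuallyAbelian (Subgroup.closure {a, b})) :
    N.FG := by
  haveI := hNab
  classical
  set ρ : G →* Multiplicative (Fin k → ℤ) := e.toMonoidHom.comp (QuotientGroup.mk' N) with hρ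
  have hker : ∀ x : G, ρ x = 1 ↔ x ∈ N := by
    intro x
    rw [hρ]
    simp only [MonoidHom.comp_apply, MulEquiv.coe_toMonoidHom]
    rw [show (1 : Multiplicative (Fin k → ℤ)) = e 1 from (map_one e).symm]
    rw [e.apply_eq_iff_eq]
    exact QuotientGroup.eq_one_iff x
  have hcommN : ∀ u v : G, ⁅u, v⁆ ∈ N := by
    intro u v
    rw [← hker, commutatorElement_def]
    simp only [map_mul, map_inv]
    rw [mul_comm (ρ u) (ρ v)]
    group
  have hρsurj : Function.Surjective ρ := e.surjective.comp (QuotientGroup.mk'_surjective N)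
  set bas : Fin k → Multiplicative (Fin k → ℤ) :=
    fun i => Multiplicative.ofAdd (Pi.single i (1 : ℤ)) with hbas
  choose a ha using fun i => hρsurj (bas i)
  -- the lifted word
  set ν : G → G := fun g => ((List.finRange k).map fun i => a i ^ (Multiplicative.toAdd (ρ g) i)).prod with hν
  have hlistsum : ∀ (l : List (Multiplicative (Fin k → ℤ))) (j : Fin k),
      Multiplicative.toAdd l.prod j = (l.map fun (u : Multiplicative (Fin k → ℤ)) => Multiplicative.toAdd u j).sum := by
    intro l j
    induction l with
    | nil => simp
    | cons u l ih => rw [List.prod_cons, toAdd_mul, Pi.add_apply, ih]; simp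
  have hρν : ∀ g : G, ρ (ν g) = ρ g := by
    intro g
    rw [hν]
    rw [map_list_prod]
    apply Multiplicative.toAdd.injective
    funext j
    rw [hlistsum, List.map_map, List.map_map]
    simp only [Function.comp_def, map_zpow, ha, toAdd_zpow, hbas, toAdd_ofAdd]
    rw [← Fin.sum_univ_def]
    simp [Pi.single_apply]
  obtain ⟨TG, hTG⟩ := hfg.out
  set S₀ : Set G := ((fun g => g * (ν g)⁻¹) '' (TG : Set G)) ∪
      (Set.range fun p : Fin k × Fin k => ⁅a p.1, a p.2⁆) with hS₀
  have hS₀fin : S₀.Finite := (TG.finite_toSet.image _).union (Set.finite_range _)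
  have hS₀N : S₀ ⊆ (N : Set G) := by
    rintro x (⟨g, hg, rfl⟩ | ⟨p, rfl⟩)
    · rw [SetLike.mem_coe, ← hker]
      simp [map_mul, map_inv, hρν]
    · exact hcommN _ _
  set C := Subgroup.normalClosure S₀ with hC
  haveI : C.Normal := Subgroup.normalClosure_normal
  have hCN : C ≤ N := Subgroup.normalClosure_le_normal hS₀N
  set π' := QuotientGroup.mk' C with hπ'
  have hcommQ : ∀ i l : Fin k, Commute (π' (a i)) (π' (a l)) := by
    intro i l
    rw [← commutatorElement_eq_one_iff_commute, ← map_commutatorElement]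
    refine (QuotientGroup.eq_one_iff _).2 ?_
    exact Subgroup.subset_normalClosure (Or.inr ⟨(i, l), rfl⟩)
  set f0 : ∀ _ : Fin k, Multiplicative ℤ →* (G ⧸ C) :=
    fun i => zpowersHom (G ⧸ C) (π' (a i)) with hf0
  have hpair : Pairwise fun i j => ∀ x y, Commute (f0 i x) (f0 j y) := by
    intro i j _
    intro x y
    simp only [hf0, zpowersHom_apply]
    exact (hcommQ i j).zpow_zpow _ _
  set θ0 := MonoidHom.noncommPiCoprod f0 hpair with hθ0
  set ι := MulEquiv.piMultiplicative (fun _ : Fin k => ℤ) with hι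
  set θ := θ0.comp ι.toMonoidHom with hθ
  have hθbas : ∀ i : Fin k, θ (bas i) = π' (a i) := by
    intro i
    have hsingle : ι (bas i) = Pi.mulSingle i (Multiplicative.ofAdd (1 : ℤ)) := by
      funext j
      by_cases hji : j = i
      · subst hji; simp [hι, hbas, MulEquiv.piMultiplicative]
      · simp [hι, hbas, MulEquiv.piMultiplicative, Pi.single_apply, Pi.mulSingle_apply, hji]
    have : θ (bas i) = θ0 (ι (bas i)) := rfl
    rw [this, hsingle, hθ0, MonoidHom.noncommPiCoprod_mulSingle]
    simp [hf0]
  have hzp : ∀ (i : Fin k) (m : ℤ), θ (ρ (a i ^ m)) = π' (a i ^ m) := by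
    intro i m
    rw [map_zpow, map_zpow, ha i, map_zpow, hθbas]
  have hagree : ∀ x : G, θ (ρ x) = π' x := by
    have hEq : Set.EqOn (θ.comp ρ) π' (TG : Set G) := by
      intro g hg
      simp only [MonoidHom.comp_apply]
      have hν1 : θ (ρ (ν g)) = π' (ν g) := by
        rw [hν]
        show (θ.comp ρ) (List.map (fun i => a i ^ Multiplicative.toAdd (ρ g) i) (List.finRange k)).prod
          = π' (List.map (fun i => a i ^ Multiplicative.toAdd (ρ g) i) (List.finRange k)).prod
        rw [map_list_prod, map_list_prod, List.map_map, List.map_map]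
        have hfun : (⇑(θ.comp ρ) ∘ fun i => a i ^ Multiplicative.toAdd (ρ g) i)
            = (⇑π' ∘ fun i => a i ^ Multiplicative.toAdd (ρ g) i) := by
          funext i
          simp only [Function.comp_apply, MonoidHom.comp_apply]
          exact hzp i _
        rw [hfun]
      have hug : π' (g * (ν g)⁻¹) = 1 :=
        (QuotientGroup.eq_one_iff _).2 (Subgroup.subset_normalClosure (Or.inl ⟨g, hg, rfl⟩))
      calc θ (ρ g) = θ (ρ (ν g)) := by rw [hρν]
        _ = π' (ν g) := hν1
        _ = π' (g * (ν g)⁻¹) * π' (ν g) := by rw [hug, one_mul]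
        _ = π' (g * (ν g)⁻¹ * ν g) := (map_mul π' _ _).symm
        _ = π' g := by rw [inv_mul_cancel_right]
    have := MonoidHom.eq_of_eqOn_dense hTG hEq
    exact fun x => congrFun (congrArg (fun (f : G →* G ⧸ C) => ⇑f) this) x
  have hNC : N ≤ C := by
    intro x hx
    have : π' x = 1 := by rw [← hagree x, (hker x).2 hx, map_one]
    exact (QuotientGroup.eq_one_iff x).1 this
  -- build the invariant finitely generated subgroup
  have main : ∀ j : ℕ, ∃ M : Subgroup G, M.FG ∧ S₀ ⊆ ↑M ∧ M ≤ N ∧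
      ∀ i : Fin k, (i : ℕ) < j → ∀ m : ℤ, ∀ x ∈ M, (a i) ^ m * x * ((a i) ^ m)⁻¹ ∈ M := by
    intro j
    induction j with
    | zero =>
      refine ⟨Subgroup.closure S₀, (Subgroup.fg_iff _).2 ⟨S₀, rfl, hS₀fin⟩,
        Subgroup.subset_closure, (Subgroup.closure_le N).2 hS₀N, ?_⟩
      intro i hi
      omega
    | succ j ih =>
      obtain ⟨M, hMfg, hMS, hMN, hMinv⟩ := ih
      by_cases hjk : j < k
      · obtain ⟨M', h1, h2, h3, h4, h5⟩ := step_fg N hNab hcommN h (a ⟨j, hjk⟩) M hMfg hMN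
        refine ⟨M', h1, fun s hs => h2 (hMS hs), h3, ?_⟩
        intro i hi m x hx
        rcases Nat.lt_or_ge (i : ℕ) j with hij | hij
        · exact h5 ((a i) ^ m) (fun y hy => hMinv i hij m y hy) x hx
        · have hieq : i = ⟨j, hjk⟩ := Fin.ext (show (i : ℕ) = j by omega)
          rw [hieq]
          exact h4 m x hx
      · exact ⟨M, hMfg, hMS, hMN, fun i hi => hMinv i (by omega)⟩
  obtain ⟨M, hMfg, hMS, hMN, hMinv⟩ := main k
  have hCM : C ≤ M := by
    have hCdef : C = Subgroup.closure (Group.conjugatesOfSet S₀) := rfl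
    rw [hCdef, Subgroup.closure_le]
    intro x hx
    obtain ⟨s, hs, hconj⟩ := Group.mem_conjugatesOfSet_iff.1 hx
    obtain ⟨g, rfl⟩ := isConj_iff.1 hconj
    have hsN : s ∈ N := hS₀N hs
    have huv : g * (ν g)⁻¹ ∈ N := by rw [← hker]; simp [map_mul, map_inv, hρν]
    have key : g * s * g⁻¹ = ν g * s * (ν g)⁻¹ := conj_eq_conj N hNab huv hsN
    have hlist : ∀ l : List G, (∀ u ∈ l, ∀ x ∈ M, u * x * u⁻¹ ∈ M) →
        ∀ x ∈ M, l.prod * x * l.prod⁻¹ ∈ M := by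
      intro l
      induction l with
      | nil => intro _ x hx; simpa using hx
      | cons u l ihl =>
        intro hl x hx
        rw [List.prod_cons]
        have e : u * l.prod * x * (u * l.prod)⁻¹ = u * (l.prod * x * l.prod⁻¹) * u⁻¹ := by group
        rw [e]
        exact hl u (by simp) _ (ihl (fun v hv => hl v (by simp [hv])) x hx)
    show g * s * g⁻¹ ∈ M
    rw [key, hν]
    apply hlist
    · intro u hu x hxM
      obtain ⟨i, _, rfl⟩ := List.mem_map.1 hu
      exact hMinv i i.isLt _ x hxM
    · exact hMS hs
  have hNM : N = M := le_antisymm (le_trans hNC hCM) hMN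
  rw [hNM]
  exact hMfg


end Helpers1

section Helpers2

variable {G : Type} [Group G]

lemma abelian_chain_step (N : Subgroup G) (hNab : IsMulCommutative N) (s : Set G) (g : G)
    (hsN : s ⊆ (N : Set G)) (hgN : g ∈ N) :
    Subgroup.closure s ≤ Subgroup.closure (insert g s) ∧
    ∃ hnorm : ((Subgroup.closure s).subgroupOf (Subgroup.closure (insert g s))).Normal,
      IsCyclic ((Subgroup.closure (insert g s)) ⧸
        (Subgroup.closure s).subgroupOf (Subgroup.closure (insert g s))) := by
  haveI := hNab
  set B := Subgroup.closure s with hB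
  set K := Subgroup.closure (insert g s) with hK
  have hBK : B ≤ K := Subgroup.closure_mono (Set.subset_insert g s)
  have hKN : K ≤ N := (Subgroup.closure_le N).2 (Set.insert_subset hgN hsN)
  have hKcomm : ∀ x y : K, x * y = y * x := by
    intro x y
    apply Subtype.ext
    exact N.mul_comm_of_mem_isMulCommutative (hKN x.2) (hKN y.2)
  have hnorm : (B.subgroupOf K).Normal := by
    constructor
    intro x hx gg
    have e : gg * x * gg⁻¹ = x := by rw [hKcomm gg x]; group
    rw [e]
    exact hx
  refine ⟨hBK, hnorm, ?_⟩
  set c : K ⧸ B.subgroupOf K := QuotientGroup.mk ⟨g, Subgroup.subset_closure (Set.mem_insert g s)⟩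
    with hc
  refine ⟨⟨c, ?_⟩⟩
  intro q
  induction q using QuotientGroup.induction_on with
  | H x =>
    obtain ⟨x, hx⟩ := x
    have key : ∀ (y : G) (hy : y ∈ K),
        (QuotientGroup.mk (⟨y, hy⟩ : K) : K ⧸ B.subgroupOf K) ∈ Subgroup.zpowers c := by
      intro y hy
      induction hy using Subgroup.closure_induction with
      | mem z hz =>
        rcases hz with rfl | hz
        · exact Subgroup.mem_zpowers c
        · have : (QuotientGroup.mk (⟨z, Subgroup.subset_closure (Set.mem_insert_of_mem _ hz)⟩ : K)
              : K ⧸ B.subgroupOf K) = 1 :=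
            (QuotientGroup.eq_one_iff _).2 (by
              show z ∈ B
              exact Subgroup.subset_closure hz)
          rw [this]
          exact Subgroup.one_mem _
      | one =>
        have : (⟨(1 : G), Subgroup.one_mem K⟩ : K) = 1 := Subtype.ext rfl
        rw [this, QuotientGroup.mk_one]
        exact Subgroup.one_mem _
      | mul y z hyK hzK ihy ihz =>
        have : (⟨y * z, Subgroup.mul_mem K hyK hzK⟩ : K) = ⟨y, hyK⟩ * ⟨z, hzK⟩ := Subtype.ext rfl
        rw [this, QuotientGroup.mk_mul]
        exact Subgroup.mul_mem _ ihy ihz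
      | inv y hyK ihy =>
        have : (⟨y⁻¹, Subgroup.inv_mem K hyK⟩ : K) = (⟨y, hyK⟩)⁻¹ := Subtype.ext rfl
        rw [this, QuotientGroup.mk_inv]
        exact Subgroup.inv_mem _ ihy
    exact key x hx

lemma pair_transfer {B K B' K' : Subgroup G} (hB : B = B') (hK : K = K')
    (hyp : B ≤ K ∧ ∃ _ : (B.subgroupOf K).Normal, IsCyclic (K ⧸ B.subgroupOf K)) :
    B' ≤ K' ∧ ∃ _ : (B'.subgroupOf K').Normal, IsCyclic (K' ⧸ B'.subgroupOf K') := by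
  subst hB
  subst hK
  exact hyp


end Helpers2

/-- **Proposition.** Let `G` be a finitely generated group with a normal abelian subgroup `N`
such that `G/N` is free abelian of finite rank. If for all `a ∈ G` and `b ∈ N` the subgroup
`⟨a, b⟩` is virtually abelian, then `G` is polycyclic. -/
theorem polycyclic_of_two_generated_virtuallyAbelian (G : Type) [Group G] (hfg : Group.FG G)
    (N : Subgroup G) [N.Normal] (hNab : IsMulCommutative N)
    (k : ℕ) (hfree : Nonempty ((G ⧸ N) ≃* Multiplicative (Fin k → ℤ)))
    (h : ∀ a : G, ∀ b ∈ N, VirtuallyAbelian (Subgroup.closure {a, b})) :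
    IsPolycyclic G := by
  classical
  obtain ⟨e⟩ := hfree
  haveI := hNab
  -- the coordinate homomorphisms
  set ρ : G →* Multiplicative (Fin k → ℤ) := e.toMonoidHom.comp (QuotientGroup.mk' N) with hρ
  have hker : ∀ x : G, ρ x = 1 ↔ x ∈ N := by
    intro x
    rw [hρ]
    simp only [MonoidHom.comp_apply, MulEquiv.coe_toMonoidHom]
    rw [show (1 : Multiplicative (Fin k → ℤ)) = e 1 from (map_one e).symm]
    rw [e.apply_eq_iff_eq]
    exact QuotientGroup.eq_one_iff x
  set φ : Fin k → (G →* Multiplicative ℤ) :=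
    fun i => (AddMonoidHom.toMultiplicative (Pi.evalAddMonoidHom (fun _ : Fin k => ℤ) i)).comp ρ
    with hφdef
  have hφ : ∀ x : G, (∀ i : Fin k, φ i x = 1) ↔ x ∈ N := by
    intro x
    rw [← hker]
    constructor
    · intro hall
      apply Multiplicative.toAdd.injective
      funext j
      have := hall j
      have h2 := congrArg Multiplicative.toAdd this
      simpa [hφdef] using h2
    · intro h1 i
      rw [hφdef]
      simp only [MonoidHom.comp_apply, h1]
      rfl
  -- the upper chain
  set τ : ℕ → Subgroup G := fun j => ⨅ (i : Fin k) (_ : j ≤ (i : ℕ)), (φ i).ker with hτdef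
  have mem_τ : ∀ (j : ℕ) (x : G), x ∈ τ j ↔ ∀ i : Fin k, j ≤ (i : ℕ) → φ i x = 1 := by
    intro j x
    simp [hτdef, Subgroup.mem_iInf, MonoidHom.mem_ker]
  have hτ0 : τ 0 = N := by
    ext x
    rw [mem_τ, ← hφ x]
    exact ⟨fun h1 i => h1 i (Nat.zero_le _), fun h1 i _ => h1 i⟩
  have hτk : τ k = ⊤ := by
    rw [eq_top_iff]
    intro x _
    rw [mem_τ]
    intro i hi
    exact absurd i.isLt (by omega)
  have hτmono : ∀ j : ℕ, τ j ≤ τ (j + 1) := by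
    intro j x hx
    rw [mem_τ] at hx ⊢
    intro i hi
    exact hx i (by omega)
  have hτnormal : ∀ j : ℕ, (τ j).Normal := by
    intro j
    constructor
    intro x hx g
    rw [mem_τ] at hx ⊢
    intro i hi
    rw [map_mul, map_mul, map_inv, hx i hi]
    simp
  have hτcyc : ∀ j : ℕ, j < k →
      ∃ hnorm : ((τ j).subgroupOf (τ (j + 1))).Normal,
        IsCyclic ((τ (j + 1)) ⧸ (τ j).subgroupOf (τ (j + 1))) := by
    intro j hj
    haveI hn0 : ((τ j).subgroupOf (τ (j + 1))).Normal := (hτnormal j).subgroupOf _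
    refine ⟨hn0, ?_⟩
    set ψ : ((τ (j + 1)) : Subgroup G) →* Multiplicative ℤ :=
      (φ ⟨j, hj⟩).comp (τ (j + 1)).subtype with hψdef
    have hkerψ : (τ j).subgroupOf (τ (j + 1)) = ψ.ker := by
      ext x
      rw [Subgroup.mem_subgroupOf, MonoidHom.mem_ker, hψdef]
      simp only [MonoidHom.comp_apply, Subgroup.coe_subtype]
      rw [mem_τ]
      constructor
      · intro h1
        exact h1 ⟨j, hj⟩ (le_refl _)
      · intro h1 i hi
        rcases Nat.eq_or_lt_of_le hi with heq | hlt
        · have : i = ⟨j, hj⟩ := Fin.ext heq.symm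
          rw [this]
          exact h1
        · exact (mem_τ (j + 1) x.1).1 x.2 i hlt
    haveI hn1 : ((τ j).subgroupOf (τ (j + 1))).Normal := (hτnormal j).subgroupOf _
    have equiv2 := (QuotientGroup.quotientKerEquivRange ψ).symm.trans
      (QuotientGroup.quotientMulEquivOfEq hkerψ).symm
    exact isCyclic_of_surjective equiv2 equiv2.surjective
  -- the lower chain
  have hNfg : N.FG := N_fg N hfg hNab k e h
  obtain ⟨T, hT⟩ := hNfg
  set l : List G := T.toList with hl
  set n : ℕ := l.length with hn
  have hTN : ∀ x ∈ l, x ∈ N := by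
    intro x hx
    rw [hl, Finset.mem_toList] at hx
    exact hT ▸ Subgroup.subset_closure hx
  set A : ℕ → Subgroup G := fun i => Subgroup.closure {x | x ∈ l.take i} with hA
  have hA0 : A 0 = ⊥ := by
    rw [hA]
    simp only [List.take_zero]
    rw [show {x : G | x ∈ ([] : List G)} = (∅ : Set G) from by ext x; simp]
    exact Subgroup.closure_empty
  have hAn : A n = N := by
    rw [hA, hn]
    simp only [List.take_length]
    rw [show {x : G | x ∈ l} = (T : Set G) from by ext x; simp [hl]]
    exact hT
  have hAN : ∀ i : ℕ, A i ≤ N := by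
    intro i
    rw [hA, Subgroup.closure_le]
    intro x hx
    exact hTN x (List.take_subset i l hx)
  have hAstep : ∀ i : ℕ, i < n → A i ≤ A (i + 1) ∧
      ∃ hnorm : ((A i).subgroupOf (A (i + 1))).Normal,
        IsCyclic ((A (i + 1)) ⧸ (A i).subgroupOf (A (i + 1))) := by
    intro i hi
    have hset : {x : G | x ∈ l.take (i + 1)} = insert (l.get ⟨i, hi⟩) {x | x ∈ l.take i} := by
      ext x
      simp only [Set.mem_setOf_eq, Set.mem_insert_iff]
      rw [List.take_succ, List.mem_append]
      rw [List.getElem?_eq_getElem hi]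
      simp only [Option.toList_some, List.mem_singleton, List.get_eq_getElem]
      tauto
    have hstep := abelian_chain_step N hNab {x | x ∈ l.take i} (l.get ⟨i, hi⟩)
      (fun x hx => hTN x (List.take_subset i l hx)) (hTN _ (List.get_mem l _))
    exact pair_transfer rfl (congrArg Subgroup.closure hset.symm) hstep
  -- combine
  set S : ℕ → Subgroup G := fun m => if m ≤ n then A m else τ (m - n) with hS
  have hSτ : ∀ m : ℕ, n ≤ m → S m = τ (m - n) := by
    intro m hm
    rw [hS]
    rcases Nat.eq_or_lt_of_le hm with heq | hlt
    · subst heq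
      simp [hAn, hτ0]
    · simp [Nat.not_le.2 hlt]
  refine ⟨n + k, fun i => S i.val, ?_, ?_, ?_⟩
  · show S 0 = ⊥
    rw [hS]
    simp [hA0]
  · show S (n + k) = ⊤
    rw [hSτ (n + k) (by omega)]
    simpa using hτk
  · intro i
    have hiv : (i.castSucc : ℕ) = (i : ℕ) := rfl
    have hiv2 : (i.succ : ℕ) = (i : ℕ) + 1 := rfl
    set m : ℕ := (i : ℕ) with hm
    have him : m < n + k := i.isLt
    show S m ≤ S (m + 1) ∧ _
    by_cases hmn : m < n
    · have e1 : S m = A m := by rw [hS]; exact if_pos (by omega)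
      have e2 : S (m + 1) = A (m + 1) := by rw [hS]; exact if_pos (by omega)
      exact pair_transfer e1.symm e2.symm ⟨(hAstep m hmn).1, (hAstep m hmn).2⟩
    · push_neg at hmn
      have e1 : S m = τ (m - n) := hSτ m hmn
      have e2 : S (m + 1) = τ (m - n + 1) := by
        rw [hSτ (m + 1) (by omega)]
        congr 1
        omega
      exact pair_transfer e1.symm e2.symm ⟨hτmono (m - n), hτcyc (m - n) (by omega)⟩
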